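/- Let X and S be independent nonnegative random variables, with S exponentially distributed with rate μ > 0 and P(S < X) > 0. Then E[min(X, S)]/P(S < X) = 1/μ = E[S]. -/

import Mathlib

open MeasureTheory ProbabilityTheory

section Aux
open Real Set Filter Topology
open scoped ENNReal NNReal

variable (mu : ℝ)

private lemma LCFS_aux_tendsto_exp_decay (hmu : 0 < mu) :
    Tendsto (fun s : ℝ => Real.exp (-(mu * s))) atTop (𝓝 0) := by
  simpa [neg_mul] using Real.tendsto_exp_comp_nhds_zero.mpr
    (Filter.Tendsto.const_mul_atTop_of_neg (neg_neg_iff_pos.mpr hmu) tendsto_id)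

private lemma LCFS_aux_hasDerivAt_F1 (s : ℝ) :
    HasDerivAt (fun a : ℝ => -Real.exp (-(mu * a))) (mu * Real.exp (-(mu * s))) s := by
  have h := (((hasDerivAt_id s).const_mul (-mu)).exp).neg
  convert! h using 1
  · ext a; simp [mul_comm, neg_mul]
  · simp [neg_mul]; ring

private lemma LCFS_aux_integral_exp_tail (x : ℝ) (hmu : 0 < mu) :
    ∫ s in Ioi x, mu * Real.exp (-(mu * s)) = Real.exp (-(mu * x)) := by
  have h := MeasureTheory.integral_Ioi_of_hasDerivAt_of_tendsto'
    (a := x) (m := 0)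
    (f := fun a : ℝ => -Real.exp (-(mu * a)))
    (f' := fun a : ℝ => mu * Real.exp (-(mu * a)))
    (fun y _ => LCFS_aux_hasDerivAt_F1 mu y)
    (by simpa [neg_mul, IntegrableOn] using (exp_neg_integrableOn_Ioi x hmu).const_mul mu)
    (by simpa using (LCFS_aux_tendsto_exp_decay mu hmu).neg)
  rw [h]; simp

private lemma LCFS_aux_hasDerivAt_F2 (s : ℝ) (hmu : 0 < mu) :
    HasDerivAt (fun a : ℝ => -(a + 1/mu) * Real.exp (-(mu * a)))
      (mu * Real.exp (-(mu * s)) * s) s := by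
  have h1 : HasDerivAt (fun a : ℝ => -(a + 1/mu)) (-1) s := by
    simpa using ((hasDerivAt_id s).add_const (1/mu)).fun_neg
  have h2 : HasDerivAt (fun a : ℝ => Real.exp (-(mu * a))) (-mu * Real.exp (-(mu * s))) s := by
    have := (((hasDerivAt_id s).const_mul (-mu)).exp)
    simpa [neg_mul, mul_comm] using this
  have := h1.mul h2
  convert! this using 1
  field_simp
  ring

private lemma LCFS_aux_tendsto_F2 (hmu : 0 < mu) :
    Tendsto (fun s : ℝ => -(s + 1/mu) * Real.exp (-(mu * s))) atTop (𝓝 0) := by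
  have h1 : Tendsto (fun s : ℝ => (mu * s) * Real.exp (-(mu * s))) atTop (𝓝 0) := by
    have := (Real.tendsto_pow_mul_exp_neg_atTop_nhds_zero 1).comp
      (Filter.Tendsto.const_mul_atTop hmu tendsto_id)
    simpa [Function.comp_def] using this
  have h2 := LCFS_aux_tendsto_exp_decay mu hmu
  have h := ((h1.const_mul (1/mu)).add (h2.const_mul (1/mu))).neg
  have heq : (fun s : ℝ => -(s + 1/mu) * Real.exp (-(mu * s)))
      = fun s : ℝ => -((1/mu) * ((mu * s) * Real.exp (-(mu * s)))
          + (1/mu) * Real.exp (-(mu * s))) := by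
    funext s; field_simp
  rw [heq]; simpa using h

private lemma LCFS_aux_integral_mean (hmu : 0 < mu) :
    ∫ s in Ioi (0:ℝ), mu * Real.exp (-(mu * s)) * s = 1/mu := by
  have h := MeasureTheory.integral_Ioi_of_hasDerivAt_of_nonneg'
    (a := (0:ℝ)) (l := 0)
    (g := fun a : ℝ => -(a + 1/mu) * Real.exp (-(mu * a)))
    (g' := fun a : ℝ => mu * Real.exp (-(mu * a)) * a)
    (fun y _ => LCFS_aux_hasDerivAt_F2 mu y hmu)
    (fun y hy => by
      have hy' : (0:ℝ) < y := hy
      positivity)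
    (LCFS_aux_tendsto_F2 mu hmu)
  rw [h]; simp [hmu.ne']

private lemma LCFS_aux_integral_min_exp (hmu : 0 < mu) {x : ℝ} (hx : 0 ≤ x) :
    ∫ s in Ioi (0:ℝ), mu * Real.exp (-(mu * s)) * min x s
      = (1 - Real.exp (-(mu * x))) / mu := by
  have hcont : Continuous fun s : ℝ => mu * Real.exp (-(mu * s)) * min x s := by
    fun_prop
  have hdisj : Disjoint (Ioc (0:ℝ) x) (Ioi x) := Set.Ioc_disjoint_Ioi le_rfl
  have hunion : Ioc (0:ℝ) x ∪ Ioi x = Ioi 0 := Set.Ioc_union_Ioi_eq_Ioi hx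
  have hint1 : IntegrableOn (fun s : ℝ => mu * Real.exp (-(mu * s)) * min x s) (Ioc 0 x) :=
    hcont.integrableOn_Ioc
  have htail : IntegrableOn (fun s : ℝ => mu * Real.exp (-(mu * s)) * x) (Ioi x) := by
    have := ((exp_neg_integrableOn_Ioi x hmu).const_mul mu).mul_const x
    simpa [neg_mul, mul_assoc, IntegrableOn] using this
  have hint2 : IntegrableOn (fun s : ℝ => mu * Real.exp (-(mu * s)) * min x s) (Ioi x) := by
    refine htail.congr_fun (fun s hs => ?_) measurableSet_Ioi
    rw [min_eq_left (le_of_lt hs)]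
  have hsplit : ∫ s in Ioi (0:ℝ), mu * Real.exp (-(mu * s)) * min x s
      = (∫ s in Ioc (0:ℝ) x, mu * Real.exp (-(mu * s)) * min x s)
        + ∫ s in Ioi x, mu * Real.exp (-(mu * s)) * min x s := by
    rw [← hunion, MeasureTheory.setIntegral_union hdisj measurableSet_Ioi hint1 hint2]
  have hpiece1 : ∫ s in Ioc (0:ℝ) x, mu * Real.exp (-(mu * s)) * min x s
      = -(x + 1/mu) * Real.exp (-(mu * x)) + 1/mu := by
    rw [MeasureTheory.setIntegral_congr_fun measurableSet_Ioc
      (fun s hs => by rw [min_eq_right hs.2])]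
    rw [← intervalIntegral.integral_of_le hx]
    rw [intervalIntegral.integral_eq_sub_of_hasDerivAt
      (f := fun a : ℝ => -(a + 1/mu) * Real.exp (-(mu * a)))
      (fun y _ => LCFS_aux_hasDerivAt_F2 mu y hmu)
      (by apply Continuous.intervalIntegrable; fun_prop)]
    simp
  have hpiece2 : ∫ s in Ioi x, mu * Real.exp (-(mu * s)) * min x s
      = Real.exp (-(mu * x)) * x := by
    rw [MeasureTheory.setIntegral_congr_fun measurableSet_Ioi
      (fun s hs => by rw [min_eq_left (le_of_lt hs)])]
    rw [MeasureTheory.integral_mul_const, LCFS_aux_integral_exp_tail mu x hmu]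
  rw [hsplit, hpiece1, hpiece2]
  field_simp
  ring

private lemma LCFS_aux_expPDFReal_eq (x : ℝ) :
    exponentialPDFReal mu x = if 0 ≤ x then mu * Real.exp (-(mu * x)) else 0 := by
  rw [exponentialPDFReal, gammaPDFReal]
  simp only [rpow_one, Real.Gamma_one, div_one, sub_self, rpow_zero, mul_one]

private lemma LCFS_aux_integral_expMeasure (hmu : 0 < mu) (f : ℝ → ℝ) :
    ∫ s, f s ∂(expMeasure mu) = ∫ s in Ioi (0:ℝ), mu * Real.exp (-(mu * s)) * f s := by
  have hd : expMeasure mu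
      = volume.withDensity (fun x => ((exponentialPDFReal mu x).toNNReal : ℝ≥0∞)) := rfl
  rw [hd, integral_withDensity_eq_integral_smul
    ((measurable_exponentialPDFReal mu).real_toNNReal) f]
  have h1 : ∀ x : ℝ, (exponentialPDFReal mu x).toNNReal • f x
      = (if 0 ≤ x then mu * Real.exp (-(mu * x)) else 0) * f x := by
    intro x
    rw [NNReal.smul_def, smul_eq_mul, Real.coe_toNNReal _ (exponentialPDFReal_nonneg hmu x),
      LCFS_aux_expPDFReal_eq]
  simp_rw [h1]
  rw [← setIntegral_eq_integral_of_forall_compl_eq_zero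
    (s := Ici (0:ℝ)) (fun x hx => by rw [if_neg (by simpa using hx), zero_mul]),
    integral_Ici_eq_integral_Ioi]
  refine setIntegral_congr_fun measurableSet_Ioi (fun s hs => ?_)
  rw [if_pos (le_of_lt hs)]

private lemma LCFS_aux_expMeasure_Iio (hmu : 0 < mu) {x : ℝ} (hx : 0 ≤ x) :
    expMeasure mu (Iio x) = ENNReal.ofReal (1 - Real.exp (-(mu * x))) := by
  have hac : expMeasure mu ≪ volume := withDensity_absolutelyContinuous _ _
  have hsing : expMeasure mu {x} = 0 := hac (measure_singleton x)
  have h1 : expMeasure mu (Iio x) = expMeasure mu (Iic x) := by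
    rw [← Set.Iic_diff_right, measure_diff_null hsing]
  rw [h1]
  have h2 : expMeasure mu (Iic x) = ∫⁻ y in Iic x, exponentialPDF mu y :=
    withDensity_apply _ measurableSet_Iic
  rw [h2, lintegral_exponentialPDF_eq_antiDeriv hmu x, if_pos hx]

private lemma LCFS_aux_expMeasure_nonneg (hmu : 0 < mu) :
    ∀ᵐ s ∂(expMeasure mu), 0 ≤ s := by
  rw [ae_iff]
  have h : {s : ℝ | ¬ 0 ≤ s} = Iio 0 := by ext s; simp [not_le]
  rw [h]
  rw [LCFS_aux_expMeasure_Iio mu hmu le_rfl]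
  simp

end Aux

/-- Memorylessness consequence for the preemptive LCFS G/M/1 queue: if `S` is
exponential with rate `μ`, independent of `X ≥ 0`, and `P(S < X) > 0`, then
`E[min(X, S)]/P(S < X) = 1/μ = E[S]`. -/
theorem LCFS_GM1_min_over_prob
    {Ω : Type*} [MeasureSpace Ω] [IsProbabilityMeasure (ℙ : Measure Ω)]
    (X S : Ω → ℝ) (mu : ℝ) (hmu : 0 < mu)
    (hXmeas : Measurable X) (hSmeas : Measurable S)
    (hXnn : ∀ᵐ ω ∂ℙ, 0 ≤ X ω)
    (hS : Measure.map S ℙ = expMeasure mu)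
    (hindep : IndepFun X S ℙ)
    (hP0 : 0 < (ℙ {ω | S ω < X ω}).toReal) :
    𝔼[fun ω => min (X ω) (S ω)] / (ℙ {ω | S ω < X ω}).toReal = 1 / mu ∧
    (1 : ℝ) / mu = 𝔼[S] := by
  set ν : Measure ℝ := Measure.map X ℙ with hν
  set η : Measure ℝ := expMeasure mu with hη
  haveI hηprob : IsProbabilityMeasure η := isProbabilityMeasure_expMeasure hmu
  haveI hνprob : IsProbabilityMeasure ν := Measure.isProbabilityMeasure_map hXmeas.aemeasurable
  -- the joint law is the product law
  have hjoint : Measure.map (fun ω => (X ω, S ω)) ℙ = ν.prod η := by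
    rw [← hS]
    exact (indepFun_iff_map_prod_eq_prod_map_map hXmeas.aemeasurable
      hSmeas.aemeasurable).mp hindep
  have hXae : ∀ᵐ x ∂ν, 0 ≤ x := by
    rw [hν]
    exact (ae_map_iff hXmeas.aemeasurable measurableSet_Ici).mpr hXnn
  have hηnn : ∀ᵐ s ∂η, 0 ≤ s := LCFS_aux_expMeasure_nonneg mu hmu
  -- inner expectation
  have hinner : ∀ x : ℝ, 0 ≤ x →
      ∫⁻ s, ENNReal.ofReal (min x s) ∂η
        = ENNReal.ofReal ((1 - Real.exp (-(mu * x))) / mu) := by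
    intro x hx
    have hmeas : AEStronglyMeasurable (fun s : ℝ => min x s) η :=
      (continuous_const.min continuous_id).aestronglyMeasurable
    have hintg : Integrable (fun s : ℝ => min x s) η := by
      refine Integrable.mono' (integrable_const x) hmeas ?_
      filter_upwards [hηnn] with s hs
      rw [Real.norm_eq_abs, abs_of_nonneg (le_min hx hs)]
      exact min_le_left _ _
    rw [← ofReal_integral_eq_lintegral_ofReal hintg
      (by filter_upwards [hηnn] with s hs; exact le_min hx hs)]
    congr 1
    rw [hη, LCFS_aux_integral_expMeasure mu hmu (fun s => min x s),
      LCFS_aux_integral_min_exp mu hmu hx]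
  -- denominator
  have hsetmeas : MeasurableSet {p : ℝ × ℝ | p.2 < p.1} :=
    measurableSet_lt measurable_snd measurable_fst
  have hD : ℙ {ω | S ω < X ω} = ∫⁻ x, ENNReal.ofReal (1 - Real.exp (-(mu * x))) ∂ν := by
    have h1 : {ω | S ω < X ω} = (fun ω => (X ω, S ω)) ⁻¹' {p : ℝ × ℝ | p.2 < p.1} := rfl
    rw [h1, ← Measure.map_apply (hXmeas.prodMk hSmeas) hsetmeas, hjoint,
      Measure.prod_apply hsetmeas]
    refine lintegral_congr_ae ?_
    filter_upwards [hXae] with x hx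
    have h2 : Prod.mk x ⁻¹' {p : ℝ × ℝ | p.2 < p.1} = Set.Iio x := rfl
    rw [h2, hη, LCFS_aux_expMeasure_Iio mu hmu hx]
  have hDnn : ∀ᵐ x ∂ν, 0 ≤ 1 - Real.exp (-(mu * x)) := by
    filter_upwards [hXae] with x hx
    have : Real.exp (-(mu * x)) ≤ 1 := Real.exp_le_one_iff.mpr (by nlinarith)
    linarith
  have hDmeas : AEStronglyMeasurable (fun x : ℝ => 1 - Real.exp (-(mu * x))) ν :=
    (show Continuous fun x : ℝ => 1 - Real.exp (-(mu * x)) by fun_prop).aestronglyMeasurable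
  have hDval : (ℙ {ω | S ω < X ω}).toReal = ∫ x, (1 - Real.exp (-(mu * x))) ∂ν := by
    rw [hD, integral_eq_lintegral_of_nonneg_ae hDnn hDmeas]
  -- numerator
  have hNnn : ∀ᵐ p : ℝ × ℝ ∂(ν.prod η), 0 ≤ min p.1 p.2 := by
    have hν0 : ν (Set.Iio 0) = 0 := by
      have := ae_iff.mp hXae
      simpa [Set.Iio, not_le] using this
    have hη0 : η (Set.Iio 0) = 0 := by
      have := ae_iff.mp hηnn
      simpa [Set.Iio, not_le] using this
    rw [ae_iff]
    refine measure_mono_null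
      (t := (Set.Iio 0 ×ˢ Set.univ) ∪ (Set.univ ×ˢ Set.Iio (0:ℝ))) (fun p hp => ?_) ?_
    · rcases min_lt_iff.mp (not_le.mp hp) with h | h
      · exact Or.inl ⟨h, Set.mem_univ _⟩
      · exact Or.inr ⟨Set.mem_univ _, h⟩
    · refine measure_union_null ?_ ?_
      · rw [Measure.prod_prod, hν0, zero_mul]
      · rw [Measure.prod_prod, hη0, mul_zero]
  have hNmeas : Measurable (fun p : ℝ × ℝ => min p.1 p.2) :=
    measurable_fst.min measurable_snd
  have hNum : 𝔼[fun ω => min (X ω) (S ω)]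
      = ∫ x, (1 - Real.exp (-(mu * x))) / mu ∂ν := by
    have h1 : 𝔼[fun ω => min (X ω) (S ω)]
        = ∫ p : ℝ × ℝ, min p.1 p.2 ∂(ν.prod η) := by
      rw [← hjoint, integral_map (hXmeas.prodMk hSmeas).aemeasurable
        hNmeas.aestronglyMeasurable]
    rw [h1, integral_eq_lintegral_of_nonneg_ae hNnn hNmeas.aestronglyMeasurable]
    rw [lintegral_prod _ (hNmeas.ennreal_ofReal.aemeasurable)]
    have h2 : ∫⁻ x, ∫⁻ s, ENNReal.ofReal (min x s) ∂η ∂ν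
        = ∫⁻ x, ENNReal.ofReal ((1 - Real.exp (-(mu * x))) / mu) ∂ν := by
      refine lintegral_congr_ae ?_
      filter_upwards [hXae] with x hx
      exact hinner x hx
    rw [h2]
    rw [← integral_eq_lintegral_of_nonneg_ae
      (by filter_upwards [hDnn] with x hx; positivity)
      ((show Continuous fun x : ℝ => (1 - Real.exp (-(mu * x))) / mu
        by fun_prop).aestronglyMeasurable)]
  -- conclusion
  have hDpos : 0 < ∫ x, (1 - Real.exp (-(mu * x))) ∂ν := hDval ▸ hP0
  constructor
  · rw [hNum, hDval, integral_div]
    rw [div_right_comm, div_self hDpos.ne']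
  · have h1 : 𝔼[S] = ∫ s, s ∂(expMeasure mu) := by
      have h2 : Measure.map S ℙ = expMeasure mu := hS
      rw [← h2]
      exact (integral_map hSmeas.aemeasurable aestronglyMeasurable_id).symm
    rw [h1, LCFS_aux_integral_expMeasure mu hmu (fun s => s),
      LCFS_aux_integral_mean mu hmu]
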